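/- arXiv:2605.28529 — 2 statements merged into one kernel-verified Lean document; each statement's English description precedes it below -/
import Mathlib

section
/- The Myerson interaction index satisfies component efficiency: for any game v, graph Γ, and connected component C of Γ, Σ_{i ∈ C} MI^{v,Γ}({i}) = v(C). -/
open Finset

noncomputable section
open scoped Classical

namespace TUGame

variable {ι : Type*} [Fintype ι] [DecidableEq ι]

/-- Harsanyi dividend of coalition `T` in game `v`. -/
def dividend (v : Finset ι → ℝ) (T : Finset ι) : ℝ :=
  ∑ R ∈ T.powerset, (-1 : ℝ) ^ (T.card - R.card) * v R

/-- Unanimity game of coalition `T`. -/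
def unanimity (T S : Finset ι) : ℝ := if T ⊆ S then 1 else 0

/-- Shapley value of player `i` in game `v`. -/
def shapley (v : Finset ι → ℝ) (i : ι) : ℝ :=
  ∑ S ∈ Finset.univ.powerset.filter (fun S => i ∈ S),
    (((S.card - 1).factorial * (Fintype.card ι - S.card).factorial : ℕ) : ℝ) /
      (((Fintype.card ι).factorial : ℕ) : ℝ) * (v S - v (S.erase i))

/-- Shapley interaction index, defined via discrete derivatives. -/
def SIderiv (v : Finset ι → ℝ) (S : Finset ι) : ℝ :=
  ∑ T ∈ (Finset.univ \ S).powerset,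
    (((Fintype.card ι - T.card - S.card).factorial * T.card.factorial : ℕ) : ℝ) /
      (((Fintype.card ι - S.card + 1).factorial : ℕ) : ℝ) *
    ∑ L ∈ S.powerset, (-1 : ℝ) ^ (S.card - L.card) * v (T ∪ L)

/-- Shapley interaction index, expressed via Harsanyi dividends. -/
def SIdiv (v : Finset ι → ℝ) (S : Finset ι) : ℝ :=
  ∑ T ∈ Finset.univ.powerset.filter (fun T => S ⊆ T),
    dividend v T / ((T.card - S.card + 1 : ℕ) : ℝ)

/-- The subgraph of `G` induced by the coalition `S` (as a graph on the same vertex set). -/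
def restrict (G : SimpleGraph ι) (S : Finset ι) : SimpleGraph ι where
  Adj i j := G.Adj i j ∧ i ∈ S ∧ j ∈ S
  symm := ⟨fun i j h => ⟨h.1.symm, h.2.2, h.2.1⟩⟩
  loopless := ⟨fun i h => G.irrefl h.1⟩

/-- Connected component of `i` in the subgraph induced by `S`. -/
def comp (G : SimpleGraph ι) (S : Finset ι) (i : ι) : Finset ι :=
  S.filter fun j => (restrict G S).Reachable i j

/-- Connected component of `i` in `G`. -/
def component (G : SimpleGraph ι) (i : ι) : Finset ι := comp G Finset.univ i

/-- Myerson graph-restricted game: sum of `v` over the connected components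
of the subgraph induced by `S`. -/
def restrictedGame (G : SimpleGraph ι) (v : Finset ι → ℝ) (S : Finset ι) : ℝ :=
  ∑ C ∈ S.image (comp G S), v C

/-- Myerson interaction index. -/
def MI (G : SimpleGraph ι) (v : Finset ι → ℝ) (S : Finset ι) : ℝ :=
  SIdiv (restrictedGame G v) S

/-- The subgraph induced by `S` is connected. -/
def ConnectedOn (G : SimpleGraph ι) (S : Finset ι) : Prop :=
  ∀ i ∈ S, ∀ j ∈ S, (restrict G S).Reachable i j

/-- `R` is a minimal `T`-connecting set of nodes in `G`. -/
def MinimalConnecting (G : SimpleGraph ι) (T R : Finset ι) : Prop :=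
  T ⊆ R ∧ ConnectedOn G R ∧ ∀ R' ⊂ R, ¬ (T ⊆ R' ∧ ConnectedOn G R')

/-- `i` is an intermediary of `T` in `G`. -/
def Intermediary (G : SimpleGraph ι) (T : Finset ι) (i : ι) : Prop :=
  ∃ R, MinimalConnecting G T R ∧ i ∈ R ∧ i ∉ T

/-- `i` is an essential intermediary of `T` in `G`. -/
def EssentialIntermediary (G : SimpleGraph ι) (T : Finset ι) (i : ι) : Prop :=
  i ∉ T ∧ ∀ R, MinimalConnecting G T R → i ∈ R

/-- `i` is a null player in game `v`. -/
def NullPlayer (v : Finset ι → ℝ) (i : ι) : Prop :=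
  ∀ S : Finset ι, i ∉ S → v (insert i S) = v S

/-- `i` is a graph null player in the communication situation `(N, v, G)`. -/
def GraphNull (G : SimpleGraph ι) (v : Finset ι → ℝ) (i : ι) : Prop :=
  NullPlayer v i ∧
    ∀ j k : ι, j ≠ k → j ≠ i → k ≠ i → Intermediary G {j, k} i →
      NullPlayer v j ∨ NullPlayer v k

/-- `P` is a veto partnership in game `v`. -/
def VetoPartnership (v : Finset ι → ℝ) (P : Finset ι) : Prop :=
  P.Nonempty ∧ ∀ T : Finset ι, T ⊆ Finset.univ \ P →
    v T = 0 ∧ ∀ S ⊂ P, v (T ∪ S) = 0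

/-- `GP` is a veto graph partnership in `(N, v, G)`. -/
def VetoGraphPartnership (G : SimpleGraph ι) (v : Finset ι → ℝ) (GP : Finset ι) : Prop :=
  GP.Nonempty ∧ ∃ P, VetoPartnership v P ∧
    ∀ i ∈ GP, i ∈ P ∨ EssentialIntermediary G P i

/-- Cutnodes of `S`: nodes of `S` whose removal disconnects the induced subgraph on `S`. -/
def cutnodes (G : SimpleGraph ι) (S : Finset ι) : Finset ι :=
  S.filter fun i => ¬ ConnectedOn G (S.erase i)


set_option linter.unusedSectionVars false

-- helper: sum over powerset of insert
lemma sum_powerset_insert' {α : Type*} [DecidableEq α] {a : α} {s : Finset α} (h : a ∉ s)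
    (f : Finset α → ℝ) :
    ∑ t ∈ (insert a s).powerset, f t = ∑ t ∈ s.powerset, (f t + f (insert a t)) := by
  rw [Finset.powerset_insert, Finset.sum_union, Finset.sum_image, Finset.sum_add_distrib]
  · intro x hx y hy hxy
    have hxa : a ∉ x := fun hc => h (mem_powerset.1 hx hc)
    have hya : a ∉ y := fun hc => h (mem_powerset.1 hy hc)
    have : (insert a x).erase a = (insert a y).erase a := by rw [hxy]
    rwa [Finset.erase_insert hxa, Finset.erase_insert hya] at this
  · rw [Finset.disjoint_left]
    intro t ht htim
    obtain ⟨u, hu, rfl⟩ := Finset.mem_image.1 htim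
    exact h (mem_powerset.1 ht (Finset.mem_insert_self a u))

lemma dividend_eq_zero {w : Finset ι → ℝ} {T : Finset ι} {j : ι} (hj : j ∈ T)
    (hw : ∀ R : Finset ι, j ∉ R → w (insert j R) = w R) :
    dividend w T = 0 := by
  have hT : T = insert j (T.erase j) := (Finset.insert_erase hj).symm
  rw [dividend, hT, sum_powerset_insert' (Finset.notMem_erase j T)]
  rw [← hT]
  apply Finset.sum_eq_zero
  intro R hR
  have hjR : j ∉ R := fun hc => (Finset.notMem_erase j T) (mem_powerset.1 hR hc)
  have hcard : (insert j R).card = R.card + 1 := Finset.card_insert_of_notMem hjR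
  have hRT : R.card + 1 ≤ T.card := by
    have : R ⊆ T.erase j := mem_powerset.1 hR
    have h1 : R.card ≤ (T.erase j).card := Finset.card_le_card this
    have h2 : (T.erase j).card = T.card - 1 := Finset.card_erase_of_mem hj
    have h3 : 1 ≤ T.card := Finset.card_pos.2 ⟨j, hj⟩
    omega
  rw [hw R hjR, hcard]
  have : T.card - R.card = (T.card - (R.card + 1)) + 1 := by omega
  rw [this, pow_succ]
  ring

lemma dividend_empty (w : Finset ι → ℝ) : dividend w ∅ = w ∅ := by
  simp [dividend]

lemma sum_neg_one_pow (x : Finset ι) :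
    (∑ m ∈ x.powerset, (-1 : ℝ) ^ m.card) = if x = ∅ then 1 else 0 := by
  have h := Finset.sum_powerset_neg_one_pow_card (x := x)
  have : ((∑ m ∈ x.powerset, (-1 : ℤ) ^ m.card : ℤ) : ℝ)
      = ∑ m ∈ x.powerset, (-1 : ℝ) ^ m.card := by push_cast; rfl
  rw [← this, h]
  split <;> simp

lemma powerset_eq_filter {S T : Finset ι} (h : T ⊆ S) :
    T.powerset = S.powerset.filter (· ⊆ T) := by
  ext R
  simp only [mem_powerset, mem_filter]
  exact ⟨fun hR => ⟨hR.trans h, hR⟩, fun hR => hR.2⟩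

lemma mobius (w : Finset ι → ℝ) (S : Finset ι) :
    ∑ T ∈ S.powerset, dividend w T = w S := by
  unfold dividend
  have step1 : ∑ T ∈ S.powerset, ∑ R ∈ T.powerset, (-1 : ℝ) ^ (T.card - R.card) * w R
      = ∑ T ∈ S.powerset, ∑ R ∈ S.powerset,
          (if R ⊆ T then (-1 : ℝ) ^ (T.card - R.card) * w R else 0) := by
    refine Finset.sum_congr rfl fun T hT => ?_
    rw [powerset_eq_filter (mem_powerset.1 hT), Finset.sum_filter]
  rw [step1, Finset.sum_comm]
  have step2 : ∀ R ∈ S.powerset,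
      ∑ T ∈ S.powerset, (if R ⊆ T then (-1 : ℝ) ^ (T.card - R.card) * w R else 0)
      = (if R = S then 1 else 0) * w R := by
    intro R hR
    have hRS : R ⊆ S := mem_powerset.1 hR
    rw [← Finset.sum_filter]
    have key : ∑ T ∈ S.powerset.filter (R ⊆ ·), (-1 : ℝ) ^ (T.card - R.card)
        = if R = S then 1 else 0 := by
      have hbij : ∑ T ∈ S.powerset.filter (R ⊆ ·), (-1 : ℝ) ^ (T.card - R.card)
          = ∑ U ∈ (S \ R).powerset, (-1 : ℝ) ^ U.card := by
        apply Finset.sum_nbij' (fun T => T \ R) (fun U => U ∪ R)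
        · intro T hT
          simp only [mem_filter, mem_powerset] at hT
          exact mem_powerset.2 (Finset.sdiff_subset_sdiff hT.1 (Finset.Subset.refl R))
        · intro U hU
          simp only [mem_powerset] at hU
          simp only [mem_filter, mem_powerset]
          constructor
          · exact Finset.union_subset (hU.trans Finset.sdiff_subset) hRS
          · exact Finset.subset_union_right
        · intro T hT
          simp only [mem_filter, mem_powerset] at hT
          exact Finset.sdiff_union_of_subset hT.2
        · intro U hU
          simp only [mem_powerset] at hU
          have : Disjoint U R := Finset.disjoint_of_subset_left hU Finset.sdiff_disjoint
          rw [Finset.union_sdiff_cancel_right this]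
        · intro T hT
          simp only [mem_filter, mem_powerset] at hT
          rw [Finset.card_sdiff_of_subset hT.2]
      rw [hbij, sum_neg_one_pow]
      congr 1
      simp only [Finset.sdiff_eq_empty_iff_subset, eq_iff_iff]
      exact ⟨fun h => Finset.Subset.antisymm hRS h, fun h => h ▸ Finset.Subset.refl S⟩
    rw [← Finset.sum_mul, key]
  rw [Finset.sum_congr rfl step2]
  simp only [ite_mul, one_mul, zero_mul]
  rw [Finset.sum_ite_eq' S.powerset S (fun R => w R)]
  rw [if_pos (Finset.mem_powerset_self S)]

lemma restrict_mono (G : SimpleGraph ι) {R' R : Finset ι} (h : R' ⊆ R) :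
    restrict G R' ≤ restrict G R := by
  intro i j hij
  exact ⟨hij.1, h hij.2.1, h hij.2.2⟩

/-- if A is closed under G-adjacency, walks from A stay in A -/
lemma reach_closed (G : SimpleGraph ι) {A : Finset ι} (R : Finset ι)
    (hA : ∀ i j, i ∈ A → G.Adj i j → j ∈ A) :
    ∀ {x y : ι}, (restrict G R).Walk x y → x ∈ A →
      (restrict G (R ∩ A)).Reachable x y ∧ y ∈ A := by
  intro x y w
  induction w with
  | nil => exact fun hx => ⟨SimpleGraph.Reachable.refl _, hx⟩
  | @cons a b c h p ih =>
    intro hx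
    have hb : b ∈ A := hA a b hx h.1
    obtain ⟨hr, hy⟩ := ih hb
    refine ⟨SimpleGraph.Reachable.trans (SimpleGraph.Adj.reachable ?_) hr, hy⟩
    exact ⟨h.1, Finset.mem_inter.2 ⟨h.2.1, hx⟩, Finset.mem_inter.2 ⟨h.2.2, hb⟩⟩

lemma comp_closed (G : SimpleGraph ι) {A : Finset ι} (R : Finset ι)
    (hA : ∀ i j, i ∈ A → G.Adj i j → j ∈ A) {j : ι} (hj : j ∈ A) :
    comp G R j = comp G (R ∩ A) j := by
  ext k
  simp only [comp, mem_filter, Finset.mem_inter]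
  constructor
  · rintro ⟨hkR, hr⟩
    obtain ⟨w⟩ := hr
    obtain ⟨hr', hkA⟩ := reach_closed G R hA w hj
    exact ⟨⟨hkR, hkA⟩, hr'⟩
  · rintro ⟨⟨hkR, _⟩, hr⟩
    exact ⟨hkR, hr.mono (restrict_mono G Finset.inter_subset_left)⟩

lemma component_closed (G : SimpleGraph ι) (i0 : ι) :
    ∀ i j, i ∈ component G i0 → G.Adj i j → j ∈ component G i0 := by
  intro i j hi hij
  simp only [component, comp, mem_filter, Finset.mem_univ, true_and] at hi ⊢
  exact hi.trans (SimpleGraph.Adj.reachable ⟨hij, Finset.mem_univ i, Finset.mem_univ j⟩)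

lemma compl_component_closed (G : SimpleGraph ι) (i0 : ι) :
    ∀ i j, i ∈ Finset.univ \ component G i0 → G.Adj i j → j ∈ Finset.univ \ component G i0 := by
  intro i j hi hij
  simp only [Finset.mem_sdiff, Finset.mem_univ, true_and] at hi ⊢
  intro hj
  apply hi
  simp only [component, comp, mem_filter, Finset.mem_univ, true_and] at hj ⊢
  exact hj.trans (SimpleGraph.Adj.reachable ⟨hij.symm, Finset.mem_univ j, Finset.mem_univ i⟩)

lemma mem_comp_self {G : SimpleGraph ι} {S : Finset ι} {j : ι} (hj : j ∈ S) :
    j ∈ comp G S j := by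
  simp only [comp, mem_filter]
  exact ⟨hj, SimpleGraph.Reachable.refl _⟩

/-- decomposition of the restricted game along a component -/
lemma restrictedGame_decomp (G : SimpleGraph ι) (v : Finset ι → ℝ) (i0 : ι) (R : Finset ι) :
    restrictedGame G v R = restrictedGame G v (R ∩ component G i0)
      + restrictedGame G v (R \ component G i0) := by
  set C := component G i0 with hC
  have hRsplit : (R ∩ C) ∪ (R \ C) = R := by
    ext x; simp only [Finset.mem_union, Finset.mem_inter, Finset.mem_sdiff]; tauto
  have hRC : R ∩ (Finset.univ \ C) = R \ C := by
    ext x; simp [Finset.mem_inter, Finset.mem_sdiff]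
  have him1 : (R ∩ C).image (comp G R) = (R ∩ C).image (comp G (R ∩ C)) := by
    apply Finset.image_congr
    intro j hj
    exact comp_closed G R (component_closed G i0) (Finset.mem_inter.1 hj).2
  have him2 : (R \ C).image (comp G R) = (R \ C).image (comp G (R \ C)) := by
    apply Finset.image_congr
    intro j hj
    have hj' : j ∈ Finset.univ \ C := by
      simp only [Finset.mem_sdiff, Finset.mem_univ, true_and]
      exact (Finset.mem_sdiff.1 hj).2
    rw [comp_closed G R (compl_component_closed G i0) hj', hRC]
  have hsplit : R.image (comp G R)
      = (R ∩ C).image (comp G (R ∩ C)) ∪ (R \ C).image (comp G (R \ C)) := by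
    rw [show R.image (comp G R) = (R ∩ C).image (comp G R) ∪ (R \ C).image (comp G R) from
      by rw [← Finset.image_union, hRsplit], him1, him2]
  have hdisj : Disjoint ((R ∩ C).image (comp G (R ∩ C))) ((R \ C).image (comp G (R \ C))) := by
    rw [Finset.disjoint_left]
    intro D hD1 hD2
    obtain ⟨j, hj, rfl⟩ := Finset.mem_image.1 hD1
    obtain ⟨k, hk, hDk⟩ := Finset.mem_image.1 hD2
    have hjD : j ∈ comp G (R ∩ C) j := mem_comp_self hj
    have : comp G (R ∩ C) j ⊆ R \ C := hDk ▸ Finset.filter_subset _ _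
    have hjRC : j ∈ R \ C := this hjD
    exact (Finset.mem_sdiff.1 hjRC).2 (Finset.mem_inter.1 hj).2
  rw [restrictedGame, hsplit, Finset.sum_union hdisj]
  rfl

/-- the value of the restricted game on a full component is v of it -/
lemma restrictedGame_component (G : SimpleGraph ι) (v : Finset ι → ℝ) (i0 : ι) :
    restrictedGame G v (component G i0) = v (component G i0) := by
  set C := component G i0 with hC
  have hi0 : i0 ∈ C := by
    simp only [hC, component, comp, mem_filter, Finset.mem_univ, true_and]
    exact SimpleGraph.Reachable.refl _
  have hcomp : ∀ j ∈ C, comp G C j = C := by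
    intro j hj
    have hreach : ∀ k ∈ C, (restrict G C).Reachable j k := by
      intro k hk
      simp only [hC, component, comp, mem_filter, Finset.mem_univ, true_and] at hj hk
      have : (restrict G Finset.univ).Reachable j k := hj.symm.trans hk
      obtain ⟨w⟩ := this
      have hjC : j ∈ C := by
        simp only [hC, component, comp, mem_filter, Finset.mem_univ, true_and]; exact hj
      have := reach_closed G Finset.univ (component_closed G i0) w hjC
      rw [Finset.univ_inter] at this; exact this.1
    ext k
    simp only [comp, mem_filter]
    exact ⟨fun h => h.1, fun h => ⟨h, hreach k h⟩⟩
  have him : C.image (comp G C) = {C} := by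
    ext D
    simp only [Finset.mem_image, Finset.mem_singleton]
    constructor
    · rintro ⟨j, hj, rfl⟩; exact hcomp j hj
    · rintro rfl; exact ⟨i0, hi0, hcomp i0 hi0⟩
  rw [restrictedGame, him, Finset.sum_singleton]

lemma restrictedGame_empty (G : SimpleGraph ι) (v : Finset ι → ℝ) :
    restrictedGame G v ∅ = 0 := by
  simp [restrictedGame]


lemma dividend_add (f g : Finset ι → ℝ) (T : Finset ι) :
    dividend (fun R => f R + g R) T = dividend f T + dividend g T := by
  simp [dividend, mul_add, Finset.sum_add_distrib]

end TUGame

open TUGame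

/-- the Myerson interaction index satisfies component efficiency. -/
theorem MI_component_efficiency {ι : Type*} [Fintype ι] [DecidableEq ι]
    (G : SimpleGraph ι) (v : Finset ι → ℝ) (C : Finset ι)
    (hC : ∃ i : ι, C = component G i) :
    ∑ i ∈ C, MI G v {i} = v C := by
  classical
  obtain ⟨i0, rfl⟩ := hC
  set C := component G i0 with hCdef
  set n := restrictedGame G v with hn
  -- Step A: rewrite MI for singletons
  have stepA : ∀ i : ι, MI G v {i}
      = ∑ T ∈ Finset.univ.powerset, (if i ∈ T then dividend n T / (T.card : ℝ) else 0) := by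
    intro i
    rw [MI, SIdiv, Finset.sum_filter]
    refine Finset.sum_congr rfl fun T _ => ?_
    by_cases hi : i ∈ T
    · rw [if_pos (Finset.singleton_subset_iff.2 hi), if_pos hi]
      have h1 : 1 ≤ T.card := Finset.card_pos.2 ⟨i, hi⟩
      have : T.card - ({i} : Finset ι).card + 1 = T.card := by
        rw [Finset.card_singleton]; omega
      rw [this]
    · rw [if_neg (fun h => hi (Finset.singleton_subset_iff.1 h)), if_neg hi]
  -- Step B: swap sums
  have stepB : ∑ i ∈ C, MI G v {i}
      = ∑ T ∈ Finset.univ.powerset, ((C ∩ T).card : ℝ) * (dividend n T / (T.card : ℝ)) := by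
    rw [Finset.sum_congr rfl fun i _ => stepA i, Finset.sum_comm]
    refine Finset.sum_congr rfl fun T _ => ?_
    rw [← Finset.sum_filter, Finset.sum_const, Finset.filter_mem_eq_inter, nsmul_eq_mul]
  -- Step C: pointwise evaluation
  have stepC : ∀ T ∈ Finset.univ.powerset,
      ((C ∩ T).card : ℝ) * (dividend n T / (T.card : ℝ))
        = if T ⊆ C then dividend n T else 0 := by
    intro T _
    by_cases hTC : T ⊆ C
    · rw [if_pos hTC]
      rcases Finset.eq_empty_or_nonempty T with rfl | hTne
      · simp [dividend_empty, hn, restrictedGame_empty]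
      · have h1 : C ∩ T = T := Finset.inter_eq_right.2 hTC
        have h2 : (T.card : ℝ) ≠ 0 := Nat.cast_ne_zero.2 (Finset.card_ne_zero.2 hTne)
        rw [h1]
        field_simp
    · rw [if_neg hTC]
      rcases Finset.eq_empty_or_nonempty (C ∩ T) with he | hne
      · rw [he]; simp
      · obtain ⟨j, hj⟩ := hne
        obtain ⟨hjC, hjT⟩ := Finset.mem_inter.1 hj
        obtain ⟨k, hkT, hkC⟩ := Finset.not_subset.1 hTC
        have hd : dividend n T = 0 := by
          have hdecomp : n = fun R => n (R ∩ C) + n (R \ C) :=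
            funext fun R => restrictedGame_decomp G v i0 R
          calc dividend n T
              = dividend (fun R => n (R ∩ C) + n (R \ C)) T := by conv_lhs => rw [hdecomp]
            _ = dividend (fun R => n (R ∩ C)) T + dividend (fun R => n (R \ C)) T :=
                dividend_add _ _ T
            _ = 0 := by
                have hz1 : dividend (fun R => n (R ∩ C)) T = 0 := by
                  refine dividend_eq_zero hkT fun R hkR => ?_
                  have : insert k R ∩ C = R ∩ C := by
                    ext x
                    simp only [Finset.mem_inter, Finset.mem_insert]
                    constructor
                    · rintro ⟨(rfl | hx), hxC⟩
                      · exact absurd hxC hkC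
                      · exact ⟨hx, hxC⟩
                    · rintro ⟨hx, hxC⟩; exact ⟨Or.inr hx, hxC⟩
                  simp only [this]
                have hz2 : dividend (fun R => n (R \ C)) T = 0 := by
                  refine dividend_eq_zero hjT fun R hjR => ?_
                  have : insert j R \ C = R \ C := by
                    ext x
                    simp only [Finset.mem_sdiff, Finset.mem_insert]
                    constructor
                    · rintro ⟨(rfl | hx), hxC⟩
                      · exact absurd hjC hxC
                      · exact ⟨hx, hxC⟩
                    · rintro ⟨hx, hxC⟩; exact ⟨Or.inr hx, hxC⟩
                  simp only [this]
                rw [hz1, hz2, add_zero]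
        rw [hd]
        simp
  rw [stepB, Finset.sum_congr rfl stepC, Finset.sum_ite, Finset.sum_const, smul_zero, add_zero]
  have hfilt : Finset.univ.powerset.filter (fun T => T ⊆ C) = C.powerset :=
    (powerset_eq_filter (Finset.subset_univ C)).symm
  rw [hfilt, mobius, hn, restrictedGame_component]
end
end

section
/- If i is a null player in game w, then Δ_w(T) = 0 for every coalition T containing i with |T| ≥ 2. -/
open Finset

noncomputable section
open scoped Classical

open TUGame

/-- Harsanyi dividends of coalitions of size at least two
containing a null player vanish. -/
theorem dividend_null_player {ι : Type*} [Fintype ι] [DecidableEq ι]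
    (w : Finset ι → ℝ) (i : ι) (h : NullPlayer w i) (hwi : w {i} = 0)
    (T : Finset ι) (hiT : i ∈ T) (hT : 2 ≤ T.card) :
    dividend w T = 0 := by
  classical
  have hi : i ∉ T.erase i := Finset.notMem_erase i T
  have hins : insert i (T.erase i) = T := Finset.insert_erase hiT
  unfold dividend
  rw [← hins, Finset.sum_powerset_insert hi, ← Finset.sum_add_distrib]
  apply Finset.sum_eq_zero
  intro R hR
  rw [Finset.mem_powerset] at hR
  have hiR : i ∉ R := fun hx => hi (hR hx)
  have hcardR : R.card ≤ (T.erase i).card := Finset.card_le_card hR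
  have hc1 : (insert i (T.erase i)).card = (T.erase i).card + 1 :=
    Finset.card_insert_of_notMem hi
  have hc2 : (insert i R).card = R.card + 1 := Finset.card_insert_of_notMem hiR
  have hw : w (insert i R) = w R := h R hiR
  rw [hw, hc1, hc2]
  have hsub : (T.erase i).card + 1 - (R.card + 1) = (T.erase i).card - R.card := by omega
  have hsucc : (T.erase i).card + 1 - R.card = ((T.erase i).card - R.card) + 1 := by omega
  rw [hsub, hsucc, pow_succ]
  ring
end
end
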